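/- (Theorem 3, adaptive Lyapunov identity.) Let J be a symmetric positive-definite 3×3 real matrix, K = (k₁,k₂,k₃) with kᵢ > 0, p ∈ ℕ, a ∈ ℝᵖ a constant unknown parameter vector, and ψ : ℝᵖ → ℝ twice continuously differentiable. Let Y : ℝ → Matrix (Fin p) (Fin 3) ℝ be continuous, let â : ℝ → ℝᵖ and s : ℝ → ℝ³ be differentiable, and suppose for all t: (i) the closed-loop error dynamics J s'(t) = −Y(t)ᵀ (a − â(t)) − K∘s(t) hold, and (ii) the adaptation law ∇²ψ(â(t)) · â'(t) = −Y(t) · s(t) holds. Then the Lyapunov function V(t) = s(t)ᵀ J s(t) + 2·d_ψ(a ‖ â(t)) is differentiable with V'(t) = −2 Σᵢ kᵢ sᵢ(t)² ≤ 0 for all t. -/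

import Mathlib

noncomputable section

open Matrix
open scoped RealInnerProductSpace

/-- Componentwise product `K∘v = (k₁v₁, k₂v₂, k₃v₃)`. -/
def compMul (K v : Fin 3 → ℝ) : Fin 3 → ℝ := fun i => K i * v i

/-- Reinterpret a plain vector as an element of Euclidean space. -/
def toE (p : ℕ) (v : Fin p → ℝ) : EuclideanSpace ℝ (Fin p) := WithLp.toLp 2 v

theorem adaptive_control_lyapunov_identity
    (J : Matrix (Fin 3) (Fin 3) ℝ) (hJsymm : J.IsSymm) (hJpos : J.PosDef)
    (K : Fin 3 → ℝ) (hK : ∀ i, 0 < K i)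
    (p : ℕ) (a : EuclideanSpace ℝ (Fin p))
    (ψ : EuclideanSpace ℝ (Fin p) → ℝ) (hψ : ContDiff ℝ 2 ψ)
    (Y : ℝ → Matrix (Fin p) (Fin 3) ℝ) (hY : ∀ i j, Continuous fun t => Y t i j)
    (ahat : ℝ → EuclideanSpace ℝ (Fin p)) (hahat : Differentiable ℝ ahat)
    (s : ℝ → Fin 3 → ℝ) (hsdiff : Differentiable ℝ s)
    (hloop : ∀ t : ℝ,
      J *ᵥ deriv s t = -((Y t)ᵀ *ᵥ (a - ahat t)) - compMul K (s t))
    (hadapt : ∀ t : ℝ,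
      (fderiv ℝ (gradient ψ) (ahat t)) (deriv ahat t) = -toE p (Y t *ᵥ s t)) :
    ∀ t : ℝ,
      HasDerivAt
        (fun τ => s τ ⬝ᵥ (J *ᵥ s τ) +
          2 * (ψ a - ψ (ahat τ) - ⟪a - ahat τ, gradient ψ (ahat τ)⟫))
        (-2 * ∑ i, K i * (s t i) ^ 2) t ∧
      -2 * ∑ i, K i * (s t i) ^ 2 ≤ 0 := by
  intro t
  constructor
  · set s' := deriv s t with hs'def
    set a' := deriv ahat t with ha'def
    have hs : HasDerivAt s s' t := (hsdiff t).hasDerivAt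
    have hsi : ∀ i, HasDerivAt (fun τ => s τ i) (s' i) t := fun i => hasDerivAt_pi.1 hs i
    have ha : HasDerivAt ahat a' t := (hahat t).hasDerivAt
    -- derivative of the quadratic term
    have hT1 : HasDerivAt (fun τ => s τ ⬝ᵥ (J *ᵥ s τ))
        (s' ⬝ᵥ (J *ᵥ s t) + s t ⬝ᵥ (J *ᵥ s')) t := by
      have h : HasDerivAt (fun τ => ∑ i, s τ i * ∑ j, J i j * s τ j)
          (∑ i, (s' i * ∑ j, J i j * s t j + s t i * ∑ j, J i j * s' j)) t := by
        refine HasDerivAt.fun_sum fun i _ => ?_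
        exact (hsi i).mul (HasDerivAt.fun_sum fun j _ => (hsi j).const_mul (J i j))
      have hfun : (fun τ => s τ ⬝ᵥ (J *ᵥ s τ)) = fun τ => ∑ i, s τ i * ∑ j, J i j * s τ j := by
        funext τ; simp [dotProduct, Matrix.mulVec]
      have hval : s' ⬝ᵥ (J *ᵥ s t) + s t ⬝ᵥ (J *ᵥ s')
          = ∑ i, (s' i * ∑ j, J i j * s t j + s t i * ∑ j, J i j * s' j) := by
        simp [dotProduct, Matrix.mulVec, Finset.sum_add_distrib]
      rw [hfun, hval]; exact h
    -- derivative of ψ ∘ ahat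
    have hψd := hψ.differentiable (by norm_num)
    have hψc : HasDerivAt (fun τ => ψ (ahat τ)) (⟪gradient ψ (ahat t), a'⟫) t := by
      have h1 := ((hψd (ahat t)).hasGradientAt.hasFDerivAt).comp_hasDerivAt t ha
      simp at h1 ⊢; exact h1
    -- differentiability of the gradient map
    have hgdiff : Differentiable ℝ (gradient ψ) := by
      have h1 : ContDiff ℝ 1 (fderiv ℝ ψ) := hψ.fderiv_right (by norm_num)
      have h2 : gradient ψ
          = fun x => (InnerProductSpace.toDual ℝ (EuclideanSpace ℝ (Fin p))).symm
              (fderiv ℝ ψ x) := rfl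
      rw [h2]
      exact (InnerProductSpace.toDual ℝ
        (EuclideanSpace ℝ (Fin p))).symm.toContinuousLinearEquiv.differentiable.comp
        (h1.differentiable one_ne_zero)
    have hgc : HasDerivAt (fun τ => gradient ψ (ahat τ))
        (fderiv ℝ (gradient ψ) (ahat t) a') t :=
      (hgdiff (ahat t)).hasFDerivAt.comp_hasDerivAt t ha
    have hdiffm : HasDerivAt (fun τ => a - ahat τ) (-a') t := ha.const_sub a
    have hinner : HasDerivAt (fun τ => ⟪a - ahat τ, gradient ψ (ahat τ)⟫)
        (⟪a - ahat t, fderiv ℝ (gradient ψ) (ahat t) a'⟫ + ⟪-a', gradient ψ (ahat t)⟫) t :=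
      HasDerivAt.inner ℝ hdiffm hgc
    have hV := hT1.add ((((hasDerivAt_const t (ψ a)).sub hψc).sub hinner).const_mul 2)
    -- identify the derivative value
    set X : ℝ := (fun i => a i - ahat t i) ⬝ᵥ (Y t *ᵥ s t) with hXdef
    have h1 : ⟪a - ahat t, fderiv ℝ (gradient ψ) (ahat t) a'⟫ = -X := by
      rw [hadapt t, inner_neg_right]
      congr 1
      rw [hXdef, EuclideanSpace.inner_eq_star_dotProduct]
      simp [toE, dotProduct, mul_comm]
    have h2 : s t ⬝ᵥ (J *ᵥ s') = -X - ∑ i, K i * (s t i) ^ 2 := by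
      rw [hs'def, hloop t, dotProduct_sub, dotProduct_neg, dotProduct_mulVec,
        vecMul_transpose]
      have hk : s t ⬝ᵥ compMul K (s t) = ∑ i, K i * (s t i) ^ 2 := by
        simp only [dotProduct, compMul]
        exact Finset.sum_congr rfl fun i _ => by ring
      have hx : (Y t *ᵥ s t) ⬝ᵥ (a - ahat t) = X := by
        rw [hXdef, dotProduct_comm]
        rfl
      rw [hk, hx]
    have h3 : s' ⬝ᵥ (J *ᵥ s t) = s t ⬝ᵥ (J *ᵥ s') := by
      rw [dotProduct_mulVec]
      conv_lhs => rw [← hJsymm]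
      rw [vecMul_transpose, dotProduct_comm]
    have h4 : ⟪-a', gradient ψ (ahat t)⟫ = -⟪gradient ψ (ahat t), a'⟫ := by
      rw [inner_neg_left, real_inner_comm]
    refine hV.congr_deriv ?_
    rw [h1, h4, h3, h2]
    ring
  · have : (0:ℝ) ≤ ∑ i, K i * (s t i) ^ 2 :=
      Finset.sum_nonneg fun i _ => mul_nonneg (hK i).le (sq_nonneg _)
    nlinarith
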